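/- Let ℓ ≥ 1, let e ∈ ℤ^ℓ with eᵢ ≥ 1 for all i, and let α ∈ ℚ with 0 ≤ α < 1. Given b ∈ ℕ^ℓ, define a ∈ ℕ^ℓ by: aᵢ = bᵢ if α·eᵢ ∉ ℤ; aᵢ = bᵢ − 1 if α·eᵢ ∈ ℤ and bᵢ ≥ 1; aᵢ = 0 if α·eᵢ ∈ ℤ and bᵢ = 0. Let N := #{ i : α·eᵢ ∈ ℤ and bᵢ ≥ 1 }. Then p_{b,<α}(s,ħ) = (s + α·ħ)^N · p_{a,α}(s,ħ) in ℚ[s,ħ]. -/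

import Mathlib

open MvPolynomial

/-- `p_{a,α}(s,ħ) = ∏ᵢ ∏_{j=1}^{aᵢ} (s + (j + ⌊α eᵢ⌋)ħ/eᵢ)` in `ℚ[s,ħ]`,
with `s = X 0` and `ħ = X 1`. -/
noncomputable def pPoly (ℓ : ℕ) (e : Fin ℓ → ℤ) (α : ℚ) (a : Fin ℓ → ℕ) :
    MvPolynomial (Fin 2) ℚ :=
  ∏ i : Fin ℓ, ∏ j ∈ Finset.Icc 1 (a i),
    (X 0 + C (((j : ℚ) + (⌊α * (e i : ℚ)⌋ : ℚ)) / (e i : ℚ)) * X 1)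

/-- `p_{a,<α}(s,ħ) = ∏ᵢ ∏_{j=0}^{aᵢ−1} (s + (j + ⌈α eᵢ⌉)ħ/eᵢ)` in `ℚ[s,ħ]`. -/
noncomputable def pPolyLt (ℓ : ℕ) (e : Fin ℓ → ℤ) (α : ℚ) (a : Fin ℓ → ℕ) :
    MvPolynomial (Fin 2) ℚ :=
  ∏ i : Fin ℓ, ∏ j ∈ Finset.range (a i),
    (X 0 + C (((j : ℚ) + (⌈α * (e i : ℚ)⌉ : ℚ)) / (e i : ℚ)) * X 1)

/-- With `aᵢ = bᵢ` if `α eᵢ ∉ ℤ`, `aᵢ = bᵢ − 1` if `α eᵢ ∈ ℤ` and `bᵢ ≥ 1`,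
`aᵢ = 0` if `α eᵢ ∈ ℤ` and `bᵢ = 0`, and
`N = #{i : α eᵢ ∈ ℤ ∧ bᵢ ≥ 1}`, one has
`p_{b,<α}(s,ħ) = (s + α ħ)^N · p_{a,α}(s,ħ)`. -/

lemma key (e : ℤ) (he : 1 ≤ e) (α : ℚ) (b : ℕ) :
    ∏ j ∈ Finset.range b, (X 0 + C (((j:ℚ) + (⌈α*(e:ℚ)⌉:ℚ))/(e:ℚ)) * X 1 : MvPolynomial (Fin 2) ℚ)
    = (if (α*(e:ℚ)).den = 1 ∧ 1 ≤ b then (X 0 + C α * X 1) else 1) *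
      ∏ j ∈ Finset.Icc 1 (if (α*(e:ℚ)).den = 1 then (if 1 ≤ b then b-1 else 0) else b),
        (X 0 + C (((j:ℚ) + (⌊α*(e:ℚ)⌋:ℚ))/(e:ℚ)) * X 1) := by
  have he0 : (e:ℚ) ≠ 0 := by
    have : (0:ℤ) < e := he
    exact_mod_cast this.ne'
  set q : ℚ := α * (e:ℚ) with hq
  have hIcc : ∀ (n : ℕ) (c : ℚ),
      ∏ j ∈ Finset.Icc 1 n, (X 0 + C (((j:ℚ) + c)/(e:ℚ)) * X 1 : MvPolynomial (Fin 2) ℚ)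
      = ∏ j ∈ Finset.range n, (X 0 + C ((((j:ℚ)+1) + c)/(e:ℚ)) * X 1) := by
    intro n c
    rw [← Finset.Ico_add_one_right_eq_Icc, Finset.prod_Ico_eq_prod_range]
    apply Finset.prod_congr (by simp) fun j _ => ?_
    push_cast
    ring_nf
  by_cases hd : q.den = 1
  · have hqz : ((q.num : ℚ)) = q := (Rat.den_eq_one_iff q).1 hd
    have hfl : ((⌊q⌋ : ℚ)) = q := by rw [← hqz, Int.floor_intCast]
    have hcl : ((⌈q⌉ : ℚ)) = q := by rw [← hqz, Int.ceil_intCast]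
    have hqe : q / (e:ℚ) = α := by field_simp [hq]; rw [hq]; ring
    rcases b with _ | k
    · simp [hd]
    · have h1 : 1 ≤ k + 1 := Nat.le_add_left 1 k
      rw [Finset.prod_range_succ']
      simp only [hd, h1, if_true, Nat.add_sub_cancel, true_and]
      rw [hIcc, hcl, hfl, mul_comm]
      congr 1
      · rw [Nat.cast_zero, zero_add, hqe]
      · apply Finset.prod_congr rfl fun j _ => ?_
        push_cast; ring_nf
  · have hne : ((⌊q⌋:ℚ)) ≠ q := fun h =>
      hd ((Rat.den_eq_one_iff q).2 (by rw [← h]; norm_cast))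
    have hcf : (⌈q⌉ : ℤ) = ⌊q⌋ + 1 := by
      refine le_antisymm (Int.ceil_le_floor_add_one q) ?_
      rw [Int.add_one_le_iff, Int.lt_ceil]
      exact lt_of_le_of_ne (Int.floor_le q) hne
    simp only [hd, if_false, false_and, one_mul]
    rw [hIcc]
    apply Finset.prod_congr rfl fun j _ => ?_
    rw [hcf]
    push_cast
    ring_nf


theorem stmt_5 (ℓ : ℕ) (hℓ : 1 ≤ ℓ) (e : Fin ℓ → ℤ) (he : ∀ i, 1 ≤ e i)
    (α : ℚ) (hα0 : 0 ≤ α) (hα1 : α < 1) (b : Fin ℓ → ℕ) :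
    pPolyLt ℓ e α b =
      (X 0 + C α * X 1) ^
          (Finset.univ.filter
            (fun i : Fin ℓ => (α * (e i : ℚ)).den = 1 ∧ 1 ≤ b i)).card *
        pPoly ℓ e α
          (fun i => if (α * (e i : ℚ)).den = 1 then
              (if 1 ≤ b i then b i - 1 else 0) else b i) := by
  unfold pPolyLt pPoly
  have := fun i => key (e i) (he i) α (b i)
  rw [Finset.prod_congr rfl fun i _ => this i, Finset.prod_mul_distrib]
  congr 1
  rw [← Finset.prod_filter, Finset.prod_const]
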